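/- For all integers d ≥ 2, n ≥ 3, m ≥ 0, every fixed h ∈ (ℝ^d)^n, and every index i ∈ ℤ/nℤ, the quantity ⟨D_s^m h_i, D_s^m h_i⟩ is a rational function of the edge lengths whose denominator in reduced form only has factors of the form |e_j(v)| and |e_j(v)| + |e_{j-1}(v)|: there exist a real polynomial P in n variables X_0, …, X_{n-1} and a polynomial Q that is a finite product of factors, each of the form X_j or X_j + X_{j-1 (mod n)}, such that for every v ∈ ℝ_*^{d×n} one has Q(|e_0(v)|, …, |e_{n-1}(v)|) > 0 and ⟨D_s^m h_i, D_s^m h_i⟩ = P(|e_0(v)|, …, |e_{n-1}(v)|) / Q(|e_0(v)|, …, |e_{n-1}(v)|). -/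

import Mathlib

open scoped InnerProductSpace BigOperators
open MeasureTheory Filter Topology

noncomputable section

/-- Euclidean space ℝ^d. -/
abbrev Vec (d : ℕ) := EuclideanSpace ℝ (Fin d)

variable {d n : ℕ}

/-- Edges of the discrete closed curve: `e i (v) = v (i+1) - v i`. -/
def edge (v : ZMod n → Vec d) (i : ZMod n) : Vec d := v (i + 1) - v i

/-- Discrete regularity: adjacent vertices are distinct. -/
def IsReg (v : ZMod n → Vec d) : Prop := ∀ i, v i ≠ v (i + 1)

/-- Total length of the discrete curve. -/
def len [NeZero n] (v : ZMod n → Vec d) : ℝ := ∑ i, ‖edge v i‖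

/-- Discrete arc-length derivative of order `m`: odd orders use forward differences
divided by `|e_i|`, even (positive) orders use backward differences divided by the
averaged edge length. -/
def Ds (v h : ZMod n → Vec d) : ℕ → ZMod n → Vec d
  | 0 => h
  | (m + 1) => fun i =>
    if (m + 1) % 2 = 1 then
      (‖edge v i‖)⁻¹ • (Ds v h m (i + 1) - Ds v h m i)
    else
      ((‖edge v i‖ + ‖edge v (i - 1)‖) / 2)⁻¹ • (Ds v h m i - Ds v h m (i - 1))

/-- The weights μ_i in the higher-order term. -/
def mu (v : ZMod n → Vec d) (m : ℕ) (i : ZMod n) : ℝ :=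
  if m % 2 = 1 then ‖edge v i‖ else (‖edge v i‖ + ‖edge v (i - 1)‖) / 2

/-- The discrete Sobolev-type metric of order `m`. -/
def gMet [NeZero n] (m : ℕ) (v h k : ZMod n → Vec d) : ℝ :=
  ∑ i, (⟪h i, k i⟫_ℝ / len v ^ 3 * ((‖edge v i‖ + ‖edge v (i - 1)‖) / 2)
    + ⟪Ds v h m i, Ds v k m i⟫_ℝ / len v ^ ((3 : ℤ) - 2 * (m : ℤ)) * mu v m i)

/-- for fixed `h` and each index `i`, `⟨D_s^m h_i, D_s^m h_i⟩` is a
rational function of the edge lengths whose denominator is a finite product of factors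
of the form `X j` or `X j + X (j-1)`, positive on the regular set. -/
lemma edge_norm_pos {v : ZMod n → Vec d} (hv : IsReg v) (a : ZMod n) : 0 < ‖edge v a‖ := by
  rw [norm_pos_iff]
  exact sub_ne_zero.mpr (Ne.symm (hv a))

def Nice (f : (ZMod n → Vec d) → ℝ) : Prop :=
  ∃ (P : MvPolynomial (ZMod n) ℝ) (L : List (MvPolynomial (ZMod n) ℝ)),
    (∀ q ∈ L, (∃ a, q = MvPolynomial.X a) ∨
        (∃ a, q = MvPolynomial.X a + MvPolynomial.X (a - 1))) ∧
    ∀ v : ZMod n → Vec d, IsReg v →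
      0 < MvPolynomial.eval (fun a => ‖edge v a‖) L.prod ∧
      f v = MvPolynomial.eval (fun a => ‖edge v a‖) P /
            MvPolynomial.eval (fun a => ‖edge v a‖) L.prod

lemma Nice.const (c : ℝ) : Nice (d := d) (n := n) (fun _ => c) :=
  ⟨MvPolynomial.C c, [], by simp, fun v hv => by simp⟩

lemma Nice.smul {f : (ZMod n → Vec d) → ℝ} (c : ℝ) (hf : Nice f) :
    Nice (fun v => c * f v) := by
  obtain ⟨P, L, hL, hev⟩ := hf
  refine ⟨MvPolynomial.C c * P, L, hL, fun v hv => ?_⟩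
  obtain ⟨hp, he⟩ := hev v hv
  refine ⟨hp, ?_⟩
  show c * f v = _
  rw [he, map_mul, MvPolynomial.eval_C, mul_div_assoc]

lemma Nice.add {f g : (ZMod n → Vec d) → ℝ} (hf : Nice f) (hg : Nice g) :
    Nice (fun v => f v + g v) := by
  obtain ⟨P1, L1, hL1, he1⟩ := hf
  obtain ⟨P2, L2, hL2, he2⟩ := hg
  refine ⟨P1 * L2.prod + P2 * L1.prod, L1 ++ L2, ?_, fun v hv => ?_⟩
  · intro q hq
    rcases List.mem_append.mp hq with h | h
    exacts [hL1 q h, hL2 q h]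
  · obtain ⟨hp1, e1⟩ := he1 v hv
    obtain ⟨hp2, e2⟩ := he2 v hv
    rw [List.prod_append, map_mul]
    refine ⟨mul_pos hp1 hp2, ?_⟩
    show f v + g v = _
    rw [e1, e2, div_add_div _ _ (ne_of_gt hp1) (ne_of_gt hp2)]
    simp [map_add, map_mul]
    ring

lemma Nice.sub {f g : (ZMod n → Vec d) → ℝ} (hf : Nice f) (hg : Nice g) :
    Nice (fun v => f v - g v) := by
  have := hf.add ((Nice.smul (-1) hg))
  simpa [sub_eq_add_neg] using this

lemma Nice.invX {f : (ZMod n → Vec d) → ℝ} (a : ZMod n) (hf : Nice f) :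
    Nice (fun v => ‖edge v a‖⁻¹ * f v) := by
  obtain ⟨P, L, hL, hev⟩ := hf
  refine ⟨P, MvPolynomial.X a :: L, ?_, fun v hv => ?_⟩
  · intro q hq
    rcases List.mem_cons.mp hq with h | h
    · exact Or.inl ⟨a, h⟩
    · exact hL q h
  · obtain ⟨hp, he⟩ := hev v hv
    have hxa : (0:ℝ) < ‖edge v a‖ := edge_norm_pos hv a
    rw [List.prod_cons, map_mul, MvPolynomial.eval_X]
    exact ⟨mul_pos hxa hp, by show _ * f v = _; rw [he]; field_simp⟩

lemma Nice.invS {f : (ZMod n → Vec d) → ℝ} (a : ZMod n) (hf : Nice f) :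
    Nice (fun v => (‖edge v a‖ + ‖edge v (a - 1)‖)⁻¹ * f v) := by
  obtain ⟨P, L, hL, hev⟩ := hf
  refine ⟨P, (MvPolynomial.X a + MvPolynomial.X (a - 1)) :: L, ?_, fun v hv => ?_⟩
  · intro q hq
    rcases List.mem_cons.mp hq with h | h
    · exact Or.inr ⟨a, h⟩
    · exact hL q h
  · obtain ⟨hp, he⟩ := hev v hv
    have hxa : (0:ℝ) < ‖edge v a‖ + ‖edge v (a - 1)‖ :=
      add_pos (edge_norm_pos hv a) (edge_norm_pos hv (a - 1))
    rw [List.prod_cons, map_mul, map_add, MvPolynomial.eval_X, MvPolynomial.eval_X]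
    exact ⟨mul_pos hxa hp, by show _ * f v = _; rw [he]; field_simp⟩

lemma nice_inner (h : ZMod n → Vec d) :
    ∀ m (i j : ZMod n), Nice (fun v => ⟪Ds v h m i, Ds v h m j⟫_ℝ) := by
  intro m
  induction m with
  | zero => intro i j; simpa [Ds] using Nice.const (d := d) (n := n) ⟪h i, h j⟫_ℝ
  | succ m ih =>
    intro i j
    by_cases hm : (m + 1) % 2 = 1
    · have key : ∀ v : ZMod n → Vec d,
          ⟪Ds v h (m+1) i, Ds v h (m+1) j⟫_ℝ =
          ‖edge v i‖⁻¹ * (‖edge v j‖⁻¹ *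
            ((⟪Ds v h m (i+1), Ds v h m (j+1)⟫_ℝ - ⟪Ds v h m (i+1), Ds v h m j⟫_ℝ) -
             (⟪Ds v h m i, Ds v h m (j+1)⟫_ℝ - ⟪Ds v h m i, Ds v h m j⟫_ℝ))) := by
        intro v
        simp only [Ds, hm, if_true]
        rw [real_inner_smul_left, real_inner_smul_right, inner_sub_left,
          inner_sub_right, inner_sub_right]
        try ring
      have := Nice.invX i (Nice.invX j
        (((ih (i+1) (j+1)).sub (ih (i+1) j)).sub ((ih i (j+1)).sub (ih i j))))
      simpa [key] using this
    · have key : ∀ v : ZMod n → Vec d,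
          ⟪Ds v h (m+1) i, Ds v h (m+1) j⟫_ℝ =
          4 * ((‖edge v i‖ + ‖edge v (i-1)‖)⁻¹ * ((‖edge v j‖ + ‖edge v (j-1)‖)⁻¹ *
            ((⟪Ds v h m i, Ds v h m j⟫_ℝ - ⟪Ds v h m i, Ds v h m (j-1)⟫_ℝ) -
             (⟪Ds v h m (i-1), Ds v h m j⟫_ℝ - ⟪Ds v h m (i-1), Ds v h m (j-1)⟫_ℝ)))) := by
        intro v
        simp only [Ds, hm, if_false]
        rw [real_inner_smul_left, real_inner_smul_right, inner_sub_left,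
          inner_sub_right, inner_sub_right]
        have hi : (0:ℝ) ≤ 1 := zero_le_one
        field_simp
        ring
      have := Nice.smul 4 (Nice.invS i (Nice.invS j
        (((ih i j).sub (ih i (j-1))).sub ((ih (i-1) j).sub (ih (i-1) (j-1))))))
      simpa [key] using this

theorem Ds_inner_rational (d n m : ℕ) (hd : 2 ≤ d) (hn : 3 ≤ n) [NeZero n]
    (h : ZMod n → Vec d) (i : ZMod n) :
    ∃ (P Q : MvPolynomial (ZMod n) ℝ) (k : ℕ) (F : Fin k → MvPolynomial (ZMod n) ℝ),
      Q = ∏ j, F j ∧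
      (∀ j, (∃ a, F j = MvPolynomial.X a) ∨
            (∃ a, F j = MvPolynomial.X a + MvPolynomial.X (a - 1))) ∧
      ∀ v : ZMod n → Vec d, IsReg v →
        0 < MvPolynomial.eval (fun a => ‖edge v a‖) Q ∧
        ⟪Ds v h m i, Ds v h m i⟫_ℝ = MvPolynomial.eval (fun a => ‖edge v a‖) P /
          MvPolynomial.eval (fun a => ‖edge v a‖) Q := by
  obtain ⟨P, L, hL, hev⟩ := nice_inner h m i i
  refine ⟨P, L.prod, L.length, fun j => L.get j, ?_, ?_, ?_⟩
  · exact (Fin.prod_univ_getElem L).symm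
  · intro j
    exact hL (L.get j) (L.get_mem j)
  · intro v hv
    exact hev v hv
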